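/- For every a > 0, the inverse square root linear unit (ISRLU) activation σ(z) = z/√(1 + a·z²) for z ≤ 0 and σ(z) = z for z > 0 satisfies: (i) σ is Lipschitz; (ii) σ is locally quadratic in the sense of Definition 3.1: there is an interval (c, d) with c < d < 0 on which σ is three times continuously differentiable with bounded derivatives and a point t ∈ (c,d) with σ'(t) ≠ 0 and σ''(t) ≠ 0; (iii) σ fixes the segment [1/4, 3/4] ⊆ [0,1], i.e. σ(z) = z for all z ∈ [1/4, 3/4]. -/

import Mathlib

open Set MeasureTheory Real
open scoped BigOperators ENNReal Classical NNReal

noncomputable section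

/-- A deep neural network with input dimension `dx`, output dimension `dy`:
`L` hidden layers, width vector `p` (with `p 0 = dx`, `p (L+1) = dy`),
weight matrices `W ℓ` and shift vectors `b ℓ` for the affine maps `A (ℓ+1)`. -/
structure DNN (dx dy : ℕ) where
  L : ℕ
  p : ℕ → ℕ
  hp0 : p 0 = dx
  hpL : p (L + 1) = dy
  W : (ℓ : ℕ) → Matrix (Fin (p (ℓ + 1))) (Fin (p ℓ)) ℝ
  b : (ℓ : ℕ) → Fin (p (ℓ + 1)) → ℝ

namespace DNN

variable {dx dy : ℕ}

/-- Output of the first `k` layers (affine map followed by componentwise activation). -/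
def hidden (σ : ℝ → ℝ) (net : DNN dx dy) : (k : ℕ) → (Fin (net.p 0) → ℝ) → (Fin (net.p k) → ℝ)
  | 0, x => x
  | k + 1, x => fun i => σ ((net.W k).mulVec (net.hidden σ k x) i + net.b k i)

/-- The function computed by the network: `A_{L+1} ∘ σ_L ∘ A_L ∘ ⋯ ∘ σ_1 ∘ A_1`. -/
def eval (σ : ℝ → ℝ) (net : DNN dx dy) (x : Fin dx → ℝ) : Fin dy → ℝ := fun j =>
  (net.W net.L).mulVec (net.hidden σ net.L fun i => x (Fin.cast net.hp0 i))
      (Fin.cast net.hpL.symm j)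
    + net.b net.L (Fin.cast net.hpL.symm j)

/-- width of a network : `max_{1 ≤ ℓ ≤ L} p ℓ`. -/
def width (net : DNN dx dy) : ℕ := Finset.sup (Finset.Icc 1 net.L) net.p

/-- number of nonzero parameters `|θ(h)|₀`. -/
def sparsity (net : DNN dx dy) : ℕ :=
  ∑ ℓ ∈ Finset.range (net.L + 1),
    ((Finset.univ.filter fun ij : Fin (net.p (ℓ + 1)) × Fin (net.p ℓ) =>
        net.W ℓ ij.1 ij.2 ≠ 0).card
      + (Finset.univ.filter fun i : Fin (net.p (ℓ + 1)) => net.b ℓ i ≠ 0).card)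

/-- `‖θ(h)‖ ≤ B` : all parameters bounded by `B` in absolute value. -/
def paramBound (net : DNN dx dy) (B : ℝ) : Prop :=
  ∀ ℓ ≤ net.L, (∀ i j, |net.W ℓ i j| ≤ B) ∧ (∀ i, |net.b ℓ i| ≤ B)

end DNN

/-- The class `H_{σ,dx,dy}(L, N, S, B)` of neural network functions. -/
def Hset (σ : ℝ → ℝ) (dx dy : ℕ) (L N S B : ℝ) : Set ((Fin dx → ℝ) → (Fin dy → ℝ)) :=
  {f | ∃ net : DNN dx dy, f = net.eval σ ∧ (net.L : ℝ) ≤ L ∧ (net.width : ℝ) ≤ N ∧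
    (net.sparsity : ℝ) ≤ S ∧ net.paramBound B}

/-- The class `H_{σ,dx,1}(L, N, S, B)` seen as real-valued functions. -/
def HsetScalar (σ : ℝ → ℝ) (dx : ℕ) (L N S B : ℝ) : Set ((Fin dx → ℝ) → ℝ) :=
  {f | ∃ g ∈ Hset σ dx 1 L N S B, ∀ x, f x = g x 0}

/-- The class `H_{σ,dx,dy}(L, N, S, B, F)` : networks with sup-norm over `X` at most `F`. -/
def HsetF (σ : ℝ → ℝ) (dx dy : ℕ) (L N S B F : ℝ) (X : Set (Fin dx → ℝ)) :
    Set ((Fin dx → ℝ) → (Fin dy → ℝ)) :=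
  {f | f ∈ Hset σ dx dy L N S B ∧ ∀ x ∈ X, ‖f x‖ ≤ F}

/-- The class `H_{σ,dx,1}(L, N, S, B, F)` of real-valued networks bounded by `F` on `X`. -/
def HsetScalarF (σ : ℝ → ℝ) (dx : ℕ) (L N S B F : ℝ) (X : Set (Fin dx → ℝ)) :
    Set ((Fin dx → ℝ) → ℝ) :=
  {f | f ∈ HsetScalar σ dx L N S B ∧ ∀ x ∈ X, |f x| ≤ F}

/-- The Hölder ball `C^{s,K}(U)` : all derivatives up to order `⌊s⌋` bounded, the
derivatives of order `⌊s⌋` are `(s-⌊s⌋)`-Hölder, and the Hölder norm is at most `K`. -/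
def HolderBall {dx : ℕ} {F : Type*} [NormedAddCommGroup F] [NormedSpace ℝ F]
    (s K : ℝ) (U : Set (Fin dx → ℝ)) (h : (Fin dx → ℝ) → F) : Prop :=
  ContDiff ℝ (⌊s⌋₊ : ℕ) h ∧
  ∃ (M : Fin (⌊s⌋₊ + 1) → ℝ) (C : ℝ), 0 ≤ C ∧
    (∀ k : Fin (⌊s⌋₊ + 1), ∀ x ∈ U, ‖iteratedFDeriv ℝ k.1 h x‖ ≤ M k) ∧
    (∀ x ∈ U, ∀ y ∈ U, ‖iteratedFDeriv ℝ ⌊s⌋₊ h x - iteratedFDeriv ℝ ⌊s⌋₊ h y‖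
        ≤ C * ‖x - y‖ ^ (s - (⌊s⌋₊ : ℝ))) ∧
    (∑ k, M k) + C ≤ K

/-- Right derivative `g'(x+)`. -/
def rightDeriv (g : ℝ → ℝ) (x : ℝ) : ℝ := derivWithin g (Set.Ici x) x

/-- Left derivative `g'(x-)`. -/
def leftDeriv (g : ℝ → ℝ) (x : ℝ) : ℝ := derivWithin g (Set.Iic x) x

/-- `g` is affine (linear in the sense of the paper) on the set `J`. -/
def IsAffineOn (g : ℝ → ℝ) (J : Set ℝ) : Prop := ∃ c d : ℝ, ∀ x ∈ J, g x = c * x + d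

/-- Continuous piecewise linear function: continuous, with break points `a 0 ≤ ⋯ ≤ a K`
at which the one-sided derivatives differ, and linear on each piece. -/
def ContPiecewiseLinear (g : ℝ → ℝ) : Prop :=
  Continuous g ∧
  ∃ (K : ℕ) (a : Fin (K + 1) → ℝ), Monotone a ∧
    (∀ k, leftDeriv g (a k) ≠ rightDeriv g (a k)) ∧
    IsAffineOn g (Set.Iic (a 0)) ∧ IsAffineOn g (Set.Ici (a (Fin.last K))) ∧
    ∀ i : Fin K, IsAffineOn g (Set.Icc (a i.castSucc) (a i.succ))

/-- Locally quadratic function: three times continuously differentiable with bounded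
derivatives on some interval `(a,b)`, with a point `t` where `g' t ≠ 0` and `g'' t ≠ 0`. -/
def LocallyQuadratic (g : ℝ → ℝ) : Prop :=
  ∃ a b : ℝ, a < b ∧ ContDiffOn ℝ 3 g (Set.Ioo a b) ∧
    (∃ M : ℝ, ∀ x ∈ Set.Ioo a b,
      |iteratedDeriv 1 g x| ≤ M ∧ |iteratedDeriv 2 g x| ≤ M ∧ |iteratedDeriv 3 g x| ≤ M) ∧
    ∃ t ∈ Set.Ioo a b, deriv g t ≠ 0 ∧ iteratedDeriv 2 g t ≠ 0

/-- `g` fixes a (nondegenerate) segment `I ⊆ [0,1]`, i.e. `g z = z` on `I`. -/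
def FixesSegment (g : ℝ → ℝ) : Prop :=
  ∃ c d : ℝ, c < d ∧ Set.Icc c d ⊆ Set.Icc (0 : ℝ) 1 ∧ ∀ z ∈ Set.Icc c d, g z = z

/-- Assumption (A4) on the activation function. -/
def GoodActivation (σ : ℝ → ℝ) : Prop :=
  (∃ Kσ : ℝ≥0, LipschitzWith Kσ σ) ∧ (ContPiecewiseLinear σ ∨ LocallyQuadratic σ) ∧
    FixesSegment σ

/-- `log₊ x = max(1, log x)`. -/
def logPlus (x : ℝ) : ℝ := max 1 (Real.log x)

/-- The (best) Lipschitz constant of a real-valued function. -/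
def lipConst {α : Type*} [PseudoMetricSpace α] (g : α → ℝ) : ℝ :=
  sInf {c : ℝ | 0 ≤ c ∧ ∀ x y, |g x - g y| ≤ c * dist x y}


section ISRLUaux

variable (a : ℝ)

private lemma isrlu_hu (ha : 0 < a) : ∀ z : ℝ, (0:ℝ) < 1 + a * z ^ 2 :=
  fun z => by nlinarith [sq_nonneg z]

private lemma isrlu_contDiff (ha : 0 < a) (n : WithTop ℕ∞) :
    ContDiff ℝ n (fun z : ℝ => z / Real.sqrt (1 + a * z ^ 2)) := by
  have hu := isrlu_hu a ha
  apply ContDiff.div contDiff_id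
  · rw [contDiff_iff_contDiffAt]
    intro z
    exact (Real.contDiffAt_sqrt (hu z).ne').comp z (by fun_prop)
  · intro z
    exact (Real.sqrt_pos.2 (hu z)).ne'

private lemma isrlu_hasDerivAt (ha : 0 < a) (z : ℝ) :
    HasDerivAt (fun z : ℝ => z / Real.sqrt (1 + a * z ^ 2))
      ((1 + a * z ^ 2) ^ (-(3/2) : ℝ)) z := by
  have hu := isrlu_hu a ha
  have h1 : HasDerivAt (fun w : ℝ => 1 + a * w ^ 2) (2 * a * z) z := by
    simpa [mul_comm, mul_assoc, mul_left_comm] using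
      ((hasDerivAt_pow 2 z).const_mul a).const_add 1
  have h2 : HasDerivAt (fun w : ℝ => (1 + a * w ^ 2) ^ (-(1/2) : ℝ))
      ((2 * a * z) * (-(1/2)) * (1 + a * z ^ 2) ^ ((-(1/2) : ℝ) - 1)) z :=
    h1.rpow_const (Or.inl (hu z).ne')
  have h3 : HasDerivAt (fun w : ℝ => w * (1 + a * w ^ 2) ^ (-(1/2) : ℝ))
      (1 * (1 + a * z ^ 2) ^ (-(1/2) : ℝ) +
        z * ((2 * a * z) * (-(1/2)) * (1 + a * z ^ 2) ^ ((-(1/2) : ℝ) - 1))) z :=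
    (hasDerivAt_id z).mul h2
  have heq : (fun w : ℝ => w * (1 + a * w ^ 2) ^ (-(1/2) : ℝ)) =
      fun w : ℝ => w / Real.sqrt (1 + a * w ^ 2) := by
    funext w
    rw [Real.sqrt_eq_rpow, Real.rpow_neg (hu w).le]
    ring
  rw [heq] at h3
  convert h3 using 1
  have hu' := hu z
  have e1 : (1 + a * z ^ 2) ^ (-(1/2) : ℝ)
      = (1 + a * z ^ 2) * (1 + a * z ^ 2) ^ (-(3/2) : ℝ) := by
    rw [← Real.rpow_one_add' hu'.le (by norm_num)]
    norm_num
  have e2 : ((-(1/2) : ℝ) - 1) = (-(3/2) : ℝ) := by norm_num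
  rw [e2, e1]; ring

private lemma isrlu_deriv (ha : 0 < a) :
    deriv (fun z : ℝ => z / Real.sqrt (1 + a * z ^ 2)) =
      fun z : ℝ => (1 + a * z ^ 2) ^ (-(3/2) : ℝ) :=
  funext fun z => (isrlu_hasDerivAt a ha z).deriv

private lemma isrlu_lip (ha : 0 < a) :
    LipschitzWith 1 (fun z : ℝ => z / Real.sqrt (1 + a * z ^ 2)) := by
  have hu := isrlu_hu a ha
  apply lipschitzWith_of_nnnorm_deriv_le
  · exact fun z => (isrlu_hasDerivAt a ha z).differentiableAt
  · intro z
    rw [← NNReal.coe_le_coe, coe_nnnorm, NNReal.coe_one, isrlu_deriv a ha,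
      Real.norm_eq_abs]
    rw [abs_of_pos (Real.rpow_pos_of_pos (hu z) _)]
    exact Real.rpow_le_one_of_one_le_of_nonpos (by nlinarith [sq_nonneg z]) (by norm_num)

end ISRLUaux

/-- For `a > 0`, the ISRLU activation `σ(z) = z/√(1+az²)` for `z ≤ 0`, `σ(z) = z` for
`z > 0`, is Lipschitz, locally quadratic on some interval `(c,d)` with `c < d < 0`, and
fixes the segment `[1/4, 3/4] ⊆ [0,1]`. -/
theorem isrlu_properties (a : ℝ) (ha : 0 < a) :
    (∃ Kσ : ℝ≥0,
      LipschitzWith Kσ (fun z : ℝ => if z ≤ 0 then z / Real.sqrt (1 + a * z ^ 2) else z)) ∧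
    LocallyQuadratic (fun z : ℝ => if z ≤ 0 then z / Real.sqrt (1 + a * z ^ 2) else z) ∧
    (∃ c d : ℝ, c < d ∧ d < 0 ∧
      ContDiffOn ℝ 3 (fun z : ℝ => if z ≤ 0 then z / Real.sqrt (1 + a * z ^ 2) else z)
        (Set.Ioo c d) ∧
      (∃ M : ℝ, ∀ x ∈ Set.Ioo c d,
        |iteratedDeriv 1 (fun z : ℝ => if z ≤ 0 then z / Real.sqrt (1 + a * z ^ 2) else z) x|
            ≤ M ∧
        |iteratedDeriv 2 (fun z : ℝ => if z ≤ 0 then z / Real.sqrt (1 + a * z ^ 2) else z) x|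
            ≤ M ∧
        |iteratedDeriv 3 (fun z : ℝ => if z ≤ 0 then z / Real.sqrt (1 + a * z ^ 2) else z) x|
            ≤ M) ∧
      ∃ t ∈ Set.Ioo c d,
        deriv (fun z : ℝ => if z ≤ 0 then z / Real.sqrt (1 + a * z ^ 2) else z) t ≠ 0 ∧
        iteratedDeriv 2 (fun z : ℝ => if z ≤ 0 then z / Real.sqrt (1 + a * z ^ 2) else z) t
          ≠ 0) ∧
    ∀ z ∈ Set.Icc (1 / 4 : ℝ) (3 / 4),
      (if z ≤ 0 then z / Real.sqrt (1 + a * z ^ 2) else z) = z := by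
  set f : ℝ → ℝ := fun z : ℝ => z / Real.sqrt (1 + a * z ^ 2) with hf
  set σ : ℝ → ℝ := fun z : ℝ => if z ≤ 0 then z / Real.sqrt (1 + a * z ^ 2) else z with hσ
  have hu := isrlu_hu a ha
  -- σ agrees with f near any negative point
  have hev : ∀ x : ℝ, x < 0 → σ =ᶠ[nhds x] f := by
    intro x hx
    filter_upwards [Iio_mem_nhds hx] with z hz
    simp only [hσ, hf, if_pos (le_of_lt (show z < 0 from hz))]
  -- Lipschitz part
  have hlip : LipschitzWith 1 σ := by
    have hfl := isrlu_lip a ha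
    have hkey : ∀ x : ℝ, x ≤ 0 → x ≤ f x ∧ f x ≤ 0 := by
      intro x hx
      have hs : 1 ≤ Real.sqrt (1 + a * x ^ 2) := by
        have h := Real.sqrt_le_sqrt (show (1:ℝ) ≤ 1 + a * x ^ 2 by nlinarith [sq_nonneg x])
        simpa using h
      have hs0 : 0 < Real.sqrt (1 + a * x ^ 2) := lt_of_lt_of_le one_pos hs
      constructor
      · rw [hf]
        rw [le_div_iff₀ hs0]
        nlinarith
      · exact div_nonpos_of_nonpos_of_nonneg hx hs0.le
    apply LipschitzWith.of_dist_le_mul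
    intro x y
    rcases le_total x y with hxy | hxy
    · by_cases hx : x ≤ 0
      · by_cases hy : y ≤ 0
        · simpa [hσ, hx, hy] using hfl.dist_le_mul x y
        · push_neg at hy
          have h1 := (hkey x hx).1
          have h2 := (hkey x hx).2
          simp only [hσ, if_pos hx, if_neg (not_le.2 hy), Real.dist_eq, NNReal.coe_one, one_mul]
          rw [abs_of_nonpos (by linarith), abs_of_nonpos (by linarith)]
          linarith
      · have hy : ¬ y ≤ 0 := by push_neg at hx ⊢; linarith
        simp [hσ, hx, hy, Real.dist_eq]
    · by_cases hy : y ≤ 0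
      · by_cases hx : x ≤ 0
        · simpa [hσ, hx, hy] using hfl.dist_le_mul x y
        · push_neg at hx
          have h1 := (hkey y hy).1
          have h2 := (hkey y hy).2
          simp only [hσ, if_pos hy, if_neg (not_le.2 hx), Real.dist_eq, NNReal.coe_one, one_mul]
          rw [abs_of_nonneg (by linarith), abs_of_nonneg (by linarith)]
          linarith
      · have hx : ¬ x ≤ 0 := by push_neg at hy ⊢; linarith
        simp [hσ, hx, hy, Real.dist_eq]
  -- main local-quadratic structure on (-2, -1)
  have hCD : ContDiffOn ℝ 3 σ (Set.Ioo (-2 : ℝ) (-1)) := by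
    apply ((isrlu_contDiff a ha 3).contDiffOn (s := Set.Ioo (-2 : ℝ) (-1))).congr
    intro z hz
    simp only [hσ, hf, if_pos (show z ≤ 0 by linarith [hz.2])]
  have hIter : ∀ (k : ℕ) (x : ℝ), x < 0 → iteratedDeriv k σ x = iteratedDeriv k f x :=
    fun k x hx => (hev x hx).iteratedDeriv_eq k
  have hbound : ∃ M : ℝ, ∀ x ∈ Set.Ioo (-2 : ℝ) (-1),
      |iteratedDeriv 1 σ x| ≤ M ∧ |iteratedDeriv 2 σ x| ≤ M ∧ |iteratedDeriv 3 σ x| ≤ M := by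
    have hc : ∀ k : ℕ, k ≤ 3 → Continuous (iteratedDeriv k f) := by
      intro k hk
      exact (isrlu_contDiff a ha 3).continuous_iteratedDeriv k (by exact_mod_cast hk)
    obtain ⟨M1, hM1⟩ := (isCompact_Icc (a := (-2:ℝ)) (b := -1)).exists_bound_of_continuousOn
      (hc 1 (by norm_num)).continuousOn
    obtain ⟨M2, hM2⟩ := (isCompact_Icc (a := (-2:ℝ)) (b := -1)).exists_bound_of_continuousOn
      (hc 2 (by norm_num)).continuousOn
    obtain ⟨M3, hM3⟩ := (isCompact_Icc (a := (-2:ℝ)) (b := -1)).exists_bound_of_continuousOn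
      (hc 3 (by norm_num)).continuousOn
    refine ⟨max (max M1 M2) M3, fun x hx => ?_⟩
    have hx0 : x < 0 := by linarith [hx.2]
    have hxI : x ∈ Set.Icc (-2:ℝ) (-1) := Ioo_subset_Icc_self hx
    refine ⟨?_, ?_, ?_⟩
    · rw [hIter 1 x hx0, ← Real.norm_eq_abs]
      exact le_trans (hM1 x hxI) (le_max_of_le_left (le_max_left _ _))
    · rw [hIter 2 x hx0, ← Real.norm_eq_abs]
      exact le_trans (hM2 x hxI) (le_max_of_le_left (le_max_right _ _))
    · rw [hIter 3 x hx0, ← Real.norm_eq_abs]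
      exact le_trans (hM3 x hxI) (le_max_right _ _)
  have ht : (-3/2 : ℝ) ∈ Set.Ioo (-2 : ℝ) (-1) := by norm_num
  have hd1 : deriv σ (-3/2 : ℝ) ≠ 0 := by
    rw [(hev _ (by norm_num)).deriv_eq, isrlu_deriv a ha]
    exact (Real.rpow_pos_of_pos (hu _) _).ne'
  have hd2 : iteratedDeriv 2 σ (-3/2 : ℝ) ≠ 0 := by
    rw [hIter 2 _ (by norm_num)]
    rw [iteratedDeriv_succ, iteratedDeriv_one, isrlu_deriv a ha]
    have h1 : HasDerivAt (fun w : ℝ => 1 + a * w ^ 2) (2 * a * (-3/2 : ℝ)) (-3/2 : ℝ) := by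
      simpa [mul_comm, mul_assoc, mul_left_comm] using
        ((hasDerivAt_pow 2 (-3/2 : ℝ)).const_mul a).const_add 1
    have h2 : HasDerivAt (fun w : ℝ => (1 + a * w ^ 2) ^ (-(3/2) : ℝ))
        ((2 * a * (-3/2 : ℝ)) * (-(3/2)) * (1 + a * (-3/2:ℝ) ^ 2) ^ ((-(3/2) : ℝ) - 1))
        (-3/2 : ℝ) :=
      h1.rpow_const (Or.inl (hu _).ne')
    rw [h2.deriv]
    have hp := Real.rpow_pos_of_pos (hu (-3/2 : ℝ)) ((-(3/2) : ℝ) - 1)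
    have : (0:ℝ) < (2 * a * (-3/2 : ℝ)) * (-(3/2)) * (1 + a * (-3/2:ℝ) ^ 2) ^ ((-(3/2) : ℝ) - 1) := by
      nlinarith [mul_pos ha hp]
    exact this.ne'
  have main : ContDiffOn ℝ 3 σ (Set.Ioo (-2:ℝ) (-1)) ∧
      (∃ M : ℝ, ∀ x ∈ Set.Ioo (-2:ℝ) (-1),
        |iteratedDeriv 1 σ x| ≤ M ∧ |iteratedDeriv 2 σ x| ≤ M ∧ |iteratedDeriv 3 σ x| ≤ M) ∧
      ∃ t ∈ Set.Ioo (-2:ℝ) (-1), deriv σ t ≠ 0 ∧ iteratedDeriv 2 σ t ≠ 0 :=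
    ⟨hCD, hbound, ⟨-3/2, ht, hd1, hd2⟩⟩
  refine ⟨⟨1, hlip⟩, ?_, ?_, ?_⟩
  · exact ⟨-2, -1, by norm_num, main.1, main.2.1, main.2.2⟩
  · exact ⟨-2, -1, by norm_num, by norm_num, main.1, main.2.1, main.2.2⟩
  · intro z hz
    rw [if_neg (by push_neg; linarith [hz.1])]
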